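/- arXiv:1412.7349 — 2 statements merged into one kernel-verified Lean document; each statement's English description precedes it below -/
import Mathlib

section
/- For every d > 0, the limit as n → ∞ of ∫₀^d (1 - x²/R_n²)^{(n-1)/2} dx equals ∫₀^d exp(-π e x²) dx. -/
open Real Filter

-- log(n+2)/n → 0
lemma aux_log_div : Tendsto (fun n : ℕ => Real.log (n + 2) / n) atTop (nhds 0) := by
  have h1 : Tendsto (fun x : ℝ => Real.log x / x) atTop (nhds 0) :=
    Real.isLittleO_log_id_atTop.tendsto_div_nhds_zero
  have h2 : Tendsto (fun n : ℕ => (n : ℝ) + 2) atTop atTop :=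
    tendsto_natCast_atTop_atTop.atTop_add tendsto_const_nhds
  have h3 : Tendsto (fun n : ℕ => Real.log (n + 2) / (n + 2)) atTop (nhds 0) := h1.comp h2
  have h4 : Tendsto (fun n : ℕ => ((n : ℝ) + 2) / n) atTop (nhds 1) := by
    have : Tendsto (fun n : ℕ => 1 + 2 / (n : ℝ)) atTop (nhds (1 + 0)) :=
      tendsto_const_nhds.add (tendsto_const_nhds.div_atTop tendsto_natCast_atTop_atTop)
    rw [add_zero] at this
    refine this.congr' ?_
    filter_upwards [eventually_gt_atTop 0] with n hn
    have : (n : ℝ) ≠ 0 := Nat.cast_ne_zero.mpr hn.ne'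
    field_simp
  have := h3.mul h4
  rw [zero_mul] at this
  refine this.congr fun n => ?_
  have h2 : ((n : ℝ) + 2) ≠ 0 := by positivity
  rw [div_mul_div_comm, mul_comm ((n:ℝ)+2), mul_div_mul_right _ _ h2]

set_option maxHeartbeats 1000000 in
lemma aux_fact (h : ℕ → ℕ) (h1 : ∀ n : ℕ, (n : ℝ) - 2 ≤ 2 * h n)
    (h2 : ∀ n : ℕ, 2 * (h n : ℝ) ≤ n + 2) :
    Tendsto (fun n : ℕ => (2 / n) * Real.log (Nat.factorial (h n)) - Real.log n)
      atTop (nhds (-(1 + Real.log 2))) := by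
  -- h tends to atTop
  have hh : Tendsto h atTop atTop := by
    rw [← tendsto_natCast_atTop_iff (R := ℝ)]
    apply tendsto_atTop_mono (fun n => by linarith [h1 n] : ∀ n : ℕ, ((n : ℝ) - 2) / 2 ≤ h n)
    apply Tendsto.atTop_div_const two_pos
    exact tendsto_natCast_atTop_atTop.atTop_add tendsto_const_nhds
  have hs : Tendsto (fun k : ℕ => Real.log (Stirling.stirlingSeq k)) atTop
      (nhds (Real.log (Real.sqrt π))) :=
    ((Real.continuousAt_log (by positivity)).tendsto).comp Stirling.tendsto_stirlingSeq_sqrt_pi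
  -- individual terms
  have t0 : Tendsto (fun n : ℕ => 2 / (n:ℝ)) atTop (nhds 0) :=
    tendsto_const_nhds.div_atTop tendsto_natCast_atTop_atTop
  have t1 : Tendsto (fun n : ℕ => (2 / n) * Real.log (Stirling.stirlingSeq (h n))) atTop
      (nhds 0) := by
    have := t0.mul (hs.comp hh)
    rwa [zero_mul] at this
  have hlog2m_le : ∀ᶠ n : ℕ in atTop, 0 ≤ Real.log (2 * h n) ∧
      Real.log (2 * h n) ≤ Real.log (n + 2) := by
    filter_upwards [hh.eventually (eventually_ge_atTop 1)] with n hn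
    have hm : (1:ℝ) ≤ (h n : ℝ) := by exact_mod_cast hn
    constructor
    · apply Real.log_nonneg; linarith
    · apply Real.log_le_log (by linarith) (by linarith [h2 n])
  have t2 : Tendsto (fun n : ℕ => (1 / (n:ℝ)) * Real.log (2 * h n)) atTop (nhds 0) := by
    apply squeeze_zero_norm' _ (aux_log_div)
    filter_upwards [hlog2m_le, eventually_gt_atTop 0] with n ⟨ha, hb⟩ hn
    have hn' : (0:ℝ) < n := by exact_mod_cast hn
    rw [Real.norm_eq_abs, abs_of_nonneg (by positivity)]
    rw [one_div, inv_mul_eq_div]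
    gcongr
  have hr : Tendsto (fun n : ℕ => 2 * (h n : ℝ) / n) atTop (nhds 1) := by
    have hlow : Tendsto (fun n : ℕ => 1 - 2 / (n:ℝ)) atTop (nhds (1 - 0)) :=
      tendsto_const_nhds.sub t0
    have hhigh : Tendsto (fun n : ℕ => 1 + 2 / (n:ℝ)) atTop (nhds (1 + 0)) :=
      tendsto_const_nhds.add t0
    rw [sub_zero] at hlow; rw [add_zero] at hhigh
    refine tendsto_of_tendsto_of_tendsto_of_le_of_le' hlow hhigh ?_ ?_ <;>
      · filter_upwards [eventually_gt_atTop 0] with n hn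
        have hn' : (0:ℝ) < n := by exact_mod_cast hn
        first
        | · rw [show 1 - 2/(n:ℝ) = ((n:ℝ) - 2)/n by field_simp]
            gcongr
            exact h1 n
        | · rw [show 1 + 2/(n:ℝ) = ((n:ℝ) + 2)/n by field_simp]
            gcongr
            exact h2 n
  have t3 : Tendsto (fun n : ℕ => (2 * (h n:ℝ) / n - 1) * Real.log (2 * h n)) atTop (nhds 0) := by
    have hb : Tendsto (fun n : ℕ => 2 * (Real.log (n + 2) / n)) atTop (nhds (2 * 0)) :=
      tendsto_const_nhds.mul aux_log_div
    rw [mul_zero] at hb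
    apply squeeze_zero_norm' _ hb
    filter_upwards [hlog2m_le, eventually_gt_atTop 0] with n ⟨ha, hb'⟩ hn
    have hn' : (0:ℝ) < n := by exact_mod_cast hn
    rw [Real.norm_eq_abs, abs_mul, abs_of_nonneg ha]
    have habs : |2 * (h n:ℝ) / n - 1| ≤ 2 / n := by
      rw [show 2 * (h n:ℝ) / n - 1 = (2 * (h n:ℝ) - n)/n by field_simp, abs_div,
        abs_of_pos hn']
      gcongr
      rw [abs_le]
      constructor
      · linarith [h1 n]
      · linarith [h2 n]
    calc |2 * (h n:ℝ) / n - 1| * Real.log (2 * h n) ≤ (2 / n) * Real.log (n + 2) := by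
          apply mul_le_mul habs hb' ha (by positivity)
      _ = 2 * (Real.log (n + 2) / n) := by ring
  have t4 : Tendsto (fun n : ℕ => Real.log (2 * (h n:ℝ) / n)) atTop (nhds 0) := by
    have := ((Real.continuousAt_log one_ne_zero).tendsto).comp hr
    rwa [Real.log_one] at this
  have t5 : Tendsto (fun n : ℕ => 2 * (h n:ℝ) / n * (Real.log 2 + 1)) atTop
      (nhds (Real.log 2 + 1)) := by
    have := hr.mul_const (Real.log 2 + 1); rwa [one_mul] at this
  have tot := (((t1.add t2).add t3).add t4).sub t5
  rw [show (0:ℝ) + 0 + 0 + 0 - (Real.log 2 + 1) = -(1 + Real.log 2) by ring] at tot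
  refine tot.congr' ?_
  filter_upwards [hh.eventually (eventually_ge_atTop 1), eventually_gt_atTop 0] with n hm hn
  have hn' : (0:ℝ) < n := by exact_mod_cast hn
  have hm' : (0:ℝ) < h n := by exact_mod_cast hm
  have hfact : Real.log (Nat.factorial (h n)) = Real.log (Stirling.stirlingSeq (h n))
      + 1 / 2 * Real.log (2 * h n) + (h n : ℝ) * (Real.log (h n) - 1) := by
    have := Stirling.log_stirlingSeq_formula (h n)
    have hld : Real.log ((h n : ℝ) / Real.exp 1) = Real.log (h n) - 1 := by
      rw [Real.log_div hm'.ne' (Real.exp_ne_zero 1), Real.log_exp]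
    rw [hld] at this
    linarith
  have hl2m : Real.log (2 * (h n:ℝ)) = Real.log 2 + Real.log (h n) :=
    Real.log_mul two_ne_zero hm'.ne'
  have hl2mn : Real.log (2 * (h n:ℝ) / n) = Real.log (2 * (h n:ℝ)) - Real.log n :=
    Real.log_div (by positivity) hn'.ne'
  rw [hfact, hl2mn, hl2m]
  field_simp
  ring

lemma gamma_log_limit :
    Tendsto (fun n : ℕ => (2 / n) * Real.log (Real.Gamma ((n : ℝ) / 2 + 1)) - Real.log n)
      atTop (nhds (-(1 + Real.log 2))) := by
  have key : ∀ n : ℕ, (n:ℝ) - 2 ≤ 2 * (n/2 : ℕ) ∧ 2 * ((n/2:ℕ):ℝ) ≤ n := by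
    intro n
    have ha := @Nat.lt_div_mul_add n 2 two_pos
    have hb := Nat.div_mul_le_self n 2
    have ha' : (n:ℝ) < (n/2:ℕ) * 2 + 2 := by exact_mod_cast ha
    have hb' : ((n/2:ℕ):ℝ) * 2 ≤ n := by exact_mod_cast hb
    constructor <;> linarith
  have hL := aux_fact (fun n => n / 2) (fun n => by linarith [(key n).1])
    (fun n => by linarith [(key n).2])
  have hU := aux_fact (fun n => n / 2 + 1)
    (fun n => by push_cast; linarith [(key n).1]) (fun n => by push_cast; linarith [(key n).2])
  refine tendsto_of_tendsto_of_tendsto_of_le_of_le' hL hU ?_ ?_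
  · filter_upwards [eventually_ge_atTop 2] with n hn
    have hk : 1 ≤ n / 2 := Nat.one_le_div_iff two_pos |>.mpr hn
    have hk' : (1:ℝ) ≤ (n/2 : ℕ) := by exact_mod_cast hk
    have hn' : (2:ℝ) ≤ n := by exact_mod_cast hn
    have harg1 : ((n/2:ℕ):ℝ) + 1 ≤ (n:ℝ)/2 + 1 := by
      linarith [(key n).2]
    have hmono := Real.Gamma_strictMonoOn_Ici.monotoneOn
      (by simp [Set.mem_Ici]; linarith : ((n/2:ℕ):ℝ) + 1 ∈ Set.Ici (2:ℝ))
      (by simp [Set.mem_Ici]; linarith : (n:ℝ)/2 + 1 ∈ Set.Ici (2:ℝ)) harg1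
    rw [Real.Gamma_nat_eq_factorial] at hmono
    have hlog := Real.log_le_log (by positivity) hmono
    have hnn : (0:ℝ) ≤ 2 / n := by positivity
    have := mul_le_mul_of_nonneg_left hlog hnn
    linarith
  · filter_upwards [eventually_ge_atTop 2] with n hn
    have hn' : (2:ℝ) ≤ n := by exact_mod_cast hn
    have harg2 : (n:ℝ)/2 + 1 ≤ ((n/2:ℕ):ℝ) + 2 := by
      linarith [(key n).1]
    have hmono := Real.Gamma_strictMonoOn_Ici.monotoneOn
      (by simp [Set.mem_Ici]; linarith : (n:ℝ)/2 + 1 ∈ Set.Ici (2:ℝ))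
      (by simp [Set.mem_Ici] : ((n/2:ℕ):ℝ) + 2 ∈ Set.Ici (2:ℝ)) harg2
    have hfact : Real.Gamma (((n/2:ℕ):ℝ) + 2) = Nat.factorial (n/2 + 1) := by
      rw [show (((n/2:ℕ):ℝ) + 2) = ((n/2 + 1 : ℕ):ℝ) + 1 by push_cast; ring,
        Real.Gamma_nat_eq_factorial]
    rw [hfact] at hmono
    have hgpos : 0 < Real.Gamma ((n:ℝ)/2 + 1) := Real.Gamma_pos_of_pos (by positivity)
    have hlog := Real.log_le_log hgpos hmono
    have hnn : (0:ℝ) ≤ 2 / n := by positivity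
    have := mul_le_mul_of_nonneg_left hlog hnn
    linarith

/-- The radius of the `n`-dimensional Euclidean ball of unit volume. -/
noncomputable def unitBallRadius (n : ℕ) : ℝ :=
  (Real.Gamma ((n : ℝ) / 2 + 1)) ^ ((1 : ℝ) / n) / Real.sqrt π

lemma radius_sq_div_limit :
    Tendsto (fun n : ℕ => unitBallRadius n ^ 2 / n) atTop
      (nhds (1 / (2 * π * Real.exp 1))) := by
  have hexp : Tendsto (fun n : ℕ => Real.exp ((2 / n) * Real.log (Real.Gamma ((n : ℝ) / 2 + 1))
      - Real.log n - Real.log π)) atTop (nhds (Real.exp (-(1 + Real.log 2) - Real.log π))) :=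
    (Real.continuous_exp.tendsto _).comp (gamma_log_limit.sub_const _)
  have hval : Real.exp (-(1 + Real.log 2) - Real.log π) = 1 / (2 * π * Real.exp 1) := by
    rw [show -(1 + Real.log 2) - Real.log π = -(Real.log 2 + Real.log π + 1) by ring,
      Real.exp_neg, show Real.log 2 + Real.log π + 1 = Real.log 2 + (Real.log π + 1) by ring,
      Real.exp_add, Real.exp_add, Real.exp_log two_pos, Real.exp_log Real.pi_pos]
    rw [one_div]
    ring_nf
  rw [hval] at hexp
  refine hexp.congr' ?_
  filter_upwards [eventually_gt_atTop 0] with n hn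
  have hn' : (0:ℝ) < n := by exact_mod_cast hn
  have hG : 0 < Real.Gamma ((n : ℝ) / 2 + 1) := Real.Gamma_pos_of_pos (by positivity)
  have hsq : unitBallRadius n ^ 2 = Real.Gamma ((n : ℝ) / 2 + 1) ^ ((2:ℝ) / n) / π := by
    rw [unitBallRadius, div_pow, sq_sqrt Real.pi_pos.le, ← Real.rpow_natCast
      (Real.Gamma ((n : ℝ) / 2 + 1) ^ ((1:ℝ)/n)) 2, ← Real.rpow_mul hG.le]
    norm_num
    rw [show ((n:ℝ))⁻¹ * 2 = 2 / n by ring]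
  rw [hsq, Real.rpow_def_of_pos hG]
  rw [Real.exp_sub, Real.exp_sub, Real.exp_log hn', Real.exp_log Real.pi_pos]
  rw [mul_comm (Real.log _)]
  ring

lemma radius_sq_atTop : Tendsto (fun n : ℕ => unitBallRadius n ^ 2) atTop atTop := by
  have h := radius_sq_div_limit.pos_mul_atTop (by positivity) tendsto_natCast_atTop_atTop
  refine h.congr' ?_
  filter_upwards [eventually_gt_atTop 0] with n hn
  have hn' : ((n:ℝ)) ≠ 0 := by positivity
  field_simp
lemma nat_div_radius_sq_limit :
    Tendsto (fun n : ℕ => (n : ℝ) / unitBallRadius n ^ 2) atTop (nhds (2 * π * Real.exp 1)) := by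
  have h := radius_sq_div_limit.inv₀ (by positivity)
  rw [one_div, inv_inv] at h
  refine h.congr fun n => ?_
  rw [← inv_div, inv_inv]

-- slope of log(1-u) at 0
lemma log_one_sub_div_limit :
    Tendsto (fun u : ℝ => Real.log (1 - u) / u) (nhdsWithin 0 {0}ᶜ) (nhds (-1)) := by
  have hf : HasDerivAt (fun u : ℝ => Real.log (1 - u)) (-1) 0 := by
    have h1 : HasDerivAt (fun u : ℝ => 1 - u) (-1) 0 := (hasDerivAt_id 0).const_sub 1
    have h2 := (Real.hasDerivAt_log (by norm_num : (1:ℝ) - 0 ≠ 0)).comp 0 h1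
    simpa [Function.comp_def] using h2
  have := hasDerivAt_iff_tendsto_slope.mp hf
  refine this.congr fun u => ?_
  simp [slope_def_field, Real.log_one]

lemma pointwise_limit (x : ℝ) (hx : 0 < x) :
    Tendsto (fun n : ℕ => (1 - x ^ 2 / unitBallRadius n ^ 2) ^ (((n : ℝ) - 1) / 2)) atTop
      (nhds (Real.exp (-(π * Real.exp 1) * x ^ 2))) := by
  set u : ℕ → ℝ := fun n => x ^ 2 / unitBallRadius n ^ 2 with hu
  have hRpos : ∀ᶠ n : ℕ in atTop, 0 < unitBallRadius n ^ 2 :=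
    radius_sq_atTop.eventually (eventually_gt_atTop 0)
  have hu0 : Tendsto u atTop (nhds 0) := by
    have := radius_sq_atTop.inv_tendsto_atTop.const_mul (x ^ 2)
    rw [mul_zero] at this
    refine this.congr fun n => ?_
    rw [hu]; simp [div_eq_mul_inv]
  have hupos : ∀ᶠ n : ℕ in atTop, 0 < u n := by
    filter_upwards [hRpos] with n hn
    exact div_pos (by positivity) hn
  have hult : ∀ᶠ n : ℕ in atTop, u n < 1 := hu0.eventually (eventually_lt_nhds one_pos)
  -- c n = ((n-1)/2) * u n → π e x²
  have hc : Tendsto (fun n : ℕ => ((n : ℝ) - 1) / 2 * u n) atTop (nhds (π * Real.exp 1 * x ^ 2)) := by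
    have h1 : Tendsto (fun n : ℕ => x ^ 2 * ((n : ℝ) / unitBallRadius n ^ 2) / 2
        - x ^ 2 * (unitBallRadius n ^ 2)⁻¹ / 2) atTop
        (nhds (x ^ 2 * (2 * π * Real.exp 1) / 2 - x ^ 2 * 0 / 2)) := by
      exact (((nat_div_radius_sq_limit.const_mul (x ^ 2)).div_const 2).sub
        (((radius_sq_atTop.inv_tendsto_atTop).const_mul (x ^ 2)).div_const 2))
    have h2 : x ^ 2 * (2 * π * Real.exp 1) / 2 - x ^ 2 * 0 / 2 = π * Real.exp 1 * x ^ 2 := by ring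
    rw [h2] at h1
    refine h1.congr fun n => ?_
    rw [hu]
    field_simp
  -- exponent limit
  have hphi : Tendsto (fun n : ℕ => Real.log (1 - u n) / u n) atTop (nhds (-1)) := by
    refine log_one_sub_div_limit.comp ?_
    rw [tendsto_nhdsWithin_iff]
    exact ⟨hu0, by filter_upwards [hupos] with n hn; exact hn.ne'⟩
  have hexp : Tendsto (fun n : ℕ => ((n : ℝ) - 1) / 2 * Real.log (1 - u n)) atTop
      (nhds (-(π * Real.exp 1) * x ^ 2)) := by
    have := hc.mul hphi
    rw [show π * Real.exp 1 * x ^ 2 * (-1) = -(π * Real.exp 1) * x ^ 2 by ring] at this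
    refine this.congr' ?_
    filter_upwards [hupos] with n hn
    field_simp
  have := (Real.continuous_exp.tendsto _).comp hexp
  refine this.congr' ?_
  filter_upwards [hult] with n hn
  rw [Function.comp_apply, Real.rpow_def_of_pos (by linarith), mul_comm]

theorem tendsto_integral_slab_density (d : ℝ) (hd : 0 < d) :
    Tendsto
      (fun n : ℕ => ∫ x in (0 : ℝ)..d,
        (1 - x ^ 2 / unitBallRadius n ^ 2) ^ (((n : ℝ) - 1) / 2))
      atTop (nhds (∫ x in (0 : ℝ)..d, Real.exp (-(π * Real.exp 1) * x ^ 2))) := by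
  have hIoc : Set.uIoc (0:ℝ) d = Set.Ioc 0 d := Set.uIoc_of_le hd.le
  apply intervalIntegral.tendsto_integral_filter_of_dominated_convergence (bound := fun _ => 1)
  · filter_upwards [eventually_ge_atTop 1] with n hn1
    have hp : (0:ℝ) ≤ ((n:ℝ) - 1) / 2 := by
      have : (1:ℝ) ≤ n := by exact_mod_cast hn1
      linarith
    exact (Continuous.rpow_const (by continuity) (fun x => Or.inr hp)).aestronglyMeasurable
  · filter_upwards [radius_sq_atTop.eventually (eventually_ge_atTop (2 * d ^ 2)),
      eventually_ge_atTop 1] with n hR hn1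
    apply Eventually.of_forall
    intro t ht
    rw [hIoc] at ht
    have hd2 : (0:ℝ) < 2 * d ^ 2 := by positivity
    have hRpos : 0 < unitBallRadius n ^ 2 := lt_of_lt_of_le hd2 hR
    have ht2 : t ^ 2 ≤ d ^ 2 := by nlinarith [ht.1, ht.2]
    have hu : t ^ 2 / unitBallRadius n ^ 2 ≤ 1 / 2 := by
      rw [div_le_div_iff₀ hRpos two_pos]
      nlinarith
    have hu0 : 0 ≤ t ^ 2 / unitBallRadius n ^ 2 := by positivity
    have hbase0 : (0:ℝ) ≤ 1 - t ^ 2 / unitBallRadius n ^ 2 := by linarith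
    have hbase1 : 1 - t ^ 2 / unitBallRadius n ^ 2 ≤ 1 := by linarith
    have hp : (0:ℝ) ≤ ((n:ℝ) - 1) / 2 := by
      have : (1:ℝ) ≤ n := by exact_mod_cast hn1
      linarith
    rw [Real.norm_eq_abs, abs_of_nonneg (Real.rpow_nonneg hbase0 _)]
    exact Real.rpow_le_one hbase0 hbase1 hp
  · exact intervalIntegrable_const
  · apply Eventually.of_forall
    intro t ht
    rw [hIoc] at ht
    exact pointwise_limit t ht.1
end

section
/- For every ε ∈ (0, 1/2) there exists D = D(ε) > 0 and N such that for all n ≥ N: if S_n ⊂ ℝ^n is the origin-centered ball of unit volume and A, B ⊆ S_n are compact convex sets each of Lebesgue measure at least ε, then dist(A, B) ≤ D. -/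
open Real Filter MeasureTheory
open scoped RealInnerProductSpace

/-- The infimum of distances between points of `A` and points of `B`. -/
noncomputable def setDist {n : ℕ} (A B : Set (EuclideanSpace ℝ (Fin n))) : ℝ :=
  sInf {d | ∃ x ∈ A, ∃ y ∈ B, d = dist x y}

lemma quad_nonpos {c M : ℝ} (hM : 0 ≤ M)
    (h : ∀ t : ℝ, 0 < t → t ≤ 1 → 2 * t * c ≤ t ^ 2 * M) : c ≤ 0 := by
  by_contra hc
  push_neg at hc
  rcases eq_or_lt_of_le hM with hM0 | hM0
  · have := h 1 one_pos le_rfl; nlinarith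
  · have ht : 0 < min 1 (c / M) := lt_min one_pos (div_pos hc hM0)
    have h2 := h _ ht (min_le_left _ _)
    have h3 : min 1 (c / M) ≤ c / M := min_le_right _ _
    have h4 : min 1 (c / M) * M ≤ c := by
      rw [← le_div_iff₀ hM0]; exact h3
    nlinarith

lemma unitBallRadius_pos (n : ℕ) : 0 < unitBallRadius n := by
  have hG : 0 < Real.Gamma ((n : ℝ) / 2 + 1) := Real.Gamma_pos_of_pos (by positivity)
  exact div_pos (Real.rpow_pos_of_pos hG _) (Real.sqrt_pos.mpr Real.pi_pos)

lemma volume_unitBall {n : ℕ} (hn : 1 ≤ n) :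
    (ENNReal.ofReal (unitBallRadius n)) ^ n *
      ENNReal.ofReal (Real.sqrt π ^ n / Real.Gamma ((n : ℝ) / 2 + 1)) = 1 := by
  have hG : 0 < Real.Gamma ((n : ℝ) / 2 + 1) := Real.Gamma_pos_of_pos (by positivity)
  have hR := unitBallRadius_pos n
  have hs : 0 < Real.sqrt π := Real.sqrt_pos.mpr Real.pi_pos
  rw [← ENNReal.ofReal_pow hR.le, ← ENNReal.ofReal_mul (by positivity)]
  have key : unitBallRadius n ^ n * (Real.sqrt π ^ n / Real.Gamma ((n : ℝ) / 2 + 1)) = 1 := by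
    unfold unitBallRadius
    rw [div_pow, ← Real.rpow_natCast (_ ^ ((1 : ℝ) / n)) n, ← Real.rpow_mul hG.le]
    have hne : (n : ℝ) ≠ 0 := Nat.cast_ne_zero.mpr (by omega)
    rw [show (1 : ℝ) / n * n = 1 by field_simp, Real.rpow_one]
    field_simp
  rw [key, ENNReal.ofReal_one]

lemma sq_le_three_pow (n : ℕ) : n ^ 2 ≤ 3 ^ n := by
  induction n with
  | zero => norm_num
  | succ n ih =>
    have h1 : n < 2 ^ n := Nat.lt_two_pow_self (n := n)
    have h2 : 2 ^ n ≤ 3 ^ n := Nat.pow_le_pow_left (by norm_num) n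
    calc (n + 1) ^ 2 = n ^ 2 + (2 * n + 1) := by ring
      _ ≤ 3 ^ n + 2 * 2 ^ n := by
          have h1' : n + 1 ≤ 2 ^ n := h1
          omega
      _ ≤ 3 ^ n + 2 * 3 ^ n := by omega
      _ = 3 ^ (n + 1) := by ring

lemma unitBallRadius_sq_le {n : ℕ} (hn : 2 ≤ n) : unitBallRadius n ^ 2 ≤ (n : ℝ) := by
  have hG : 0 < Real.Gamma ((n : ℝ) / 2 + 1) := Real.Gamma_pos_of_pos (by positivity)
  have hnR : (2 : ℝ) ≤ (n : ℝ) := by exact_mod_cast hn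
  have hn0 : (0 : ℝ) < (n : ℝ) := by linarith
  have hne : (n : ℝ) ≠ 0 := ne_of_gt hn0
  set k : ℕ := (n + 1) / 2 with hk
  have hk1 : (n : ℝ) ≤ 2 * (k : ℝ) := by
    have : n ≤ 2 * k := by omega
    exact_mod_cast this
  have hk2 : (k : ℝ) ≤ (n : ℝ) / 2 + 1 := by
    have : 2 * k ≤ n + 2 := by omega
    have := (Nat.cast_le (α := ℝ)).mpr this
    push_cast at this
    linarith
  have hkn : k ≤ n := by omega
  -- Step A : Gamma (n/2+1) ≤ (π * n) ^ (n/2)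
  have stepA : Real.Gamma ((n : ℝ) / 2 + 1) ≤ (π * n) ^ ((n : ℝ) / 2) := by
    have h1 : Real.Gamma ((n : ℝ) / 2 + 1) ≤ Real.Gamma ((k : ℝ) + 1) := by
      rcases eq_or_lt_of_le (show (n : ℝ) / 2 + 1 ≤ (k : ℝ) + 1 by linarith) with h | h
      · rw [h]
      · exact (Real.Gamma_strictMonoOn_Ici (by simp; linarith) (by simp; linarith) h).le
    have h2 : Real.Gamma ((k : ℝ) + 1) = (Nat.factorial k : ℝ) := Real.Gamma_nat_eq_factorial k
    have h3 : (Nat.factorial k : ℝ) ≤ (k : ℝ) ^ k := by exact_mod_cast Nat.factorial_le_pow k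
    have h4 : (k : ℝ) ^ k ≤ (n : ℝ) ^ k :=
      pow_le_pow_left₀ (by positivity) (by exact_mod_cast hkn) k
    have h5 : (n : ℝ) ^ k = (n : ℝ) ^ ((k : ℕ) : ℝ) := (Real.rpow_natCast _ _).symm
    have h6 : (n : ℝ) ^ ((k : ℕ) : ℝ) ≤ (n : ℝ) ^ ((n : ℝ) / 2 + 1) :=
      Real.rpow_le_rpow_of_exponent_le (by linarith) hk2
    have h7 : (n : ℝ) ^ ((n : ℝ) / 2 + 1) = (n : ℝ) ^ ((n : ℝ) / 2) * n := by
      rw [Real.rpow_add hn0, Real.rpow_one]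
    have h8 : (n : ℝ) ≤ π ^ ((n : ℝ) / 2) := by
      have h3n : (n : ℝ) ≤ (3 : ℝ) ^ ((n : ℝ) / 2) := by
        apply le_of_pow_le_pow_left₀ (two_ne_zero) (by positivity)
        have e : ((3 : ℝ) ^ ((n : ℝ) / 2)) ^ (2 : ℕ) = (3 : ℝ) ^ (n : ℝ) := by
          rw [← Real.rpow_natCast ((3:ℝ) ^ ((n:ℝ)/2)) 2, ← Real.rpow_mul (by norm_num)]
          norm_num
        rw [e, Real.rpow_natCast]
        exact_mod_cast sq_le_three_pow n
      calc (n : ℝ) ≤ (3 : ℝ) ^ ((n : ℝ) / 2) := h3n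
        _ ≤ π ^ ((n : ℝ) / 2) :=
          Real.rpow_le_rpow (by norm_num) (by linarith [Real.pi_gt_three]) (by positivity)
    have h9 : (π * n) ^ ((n : ℝ) / 2) = π ^ ((n : ℝ) / 2) * (n : ℝ) ^ ((n : ℝ) / 2) :=
      Real.mul_rpow Real.pi_pos.le hn0.le
    calc Real.Gamma ((n : ℝ) / 2 + 1) ≤ (n : ℝ) ^ ((n : ℝ) / 2) * n := by
          rw [← h7]; rw [h2] at h1; rw [h5] at h4; linarith
      _ ≤ π ^ ((n : ℝ) / 2) * (n : ℝ) ^ ((n : ℝ) / 2) := by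
          have : (n : ℝ) ^ ((n : ℝ) / 2) * n ≤ (n : ℝ) ^ ((n : ℝ) / 2) * π ^ ((n : ℝ) / 2) :=
            mul_le_mul_of_nonneg_left h8 (by positivity)
          linarith [this]
      _ = (π * n) ^ ((n : ℝ) / 2) := h9.symm
  -- Step B
  unfold unitBallRadius
  rw [div_pow, Real.sq_sqrt Real.pi_pos.le]
  rw [div_le_iff₀ Real.pi_pos]
  have e1 : (Real.Gamma ((n : ℝ) / 2 + 1) ^ ((1 : ℝ) / n)) ^ (2 : ℕ)
      = Real.Gamma ((n : ℝ) / 2 + 1) ^ ((2 : ℝ) / n) := by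
    rw [← Real.rpow_natCast (_ ^ ((1:ℝ)/n)) 2, ← Real.rpow_mul hG.le]
    rw [show (1:ℝ)/n * ((2:ℕ):ℝ) = 2/n by push_cast; ring]
  rw [e1]
  have e2 : ((π * n) ^ ((n : ℝ) / 2)) ^ ((2 : ℝ) / n) = π * n := by
    rw [← Real.rpow_mul (by positivity)]
    rw [show (n : ℝ) / 2 * (2 / n) = 1 by field_simp, Real.rpow_one]
  calc Real.Gamma ((n : ℝ) / 2 + 1) ^ ((2 : ℝ) / n)
      ≤ ((π * n) ^ ((n : ℝ) / 2)) ^ ((2 : ℝ) / n) :=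
        Real.rpow_le_rpow hG.le stepA (by positivity)
    _ = π * n := e2
    _ = (n : ℝ) * π := by ring

lemma min_sep {n : ℕ} {A B : Set (EuclideanSpace ℝ (Fin n))}
    (hA : Convex ℝ A) (hB : Convex ℝ B) {x y : EuclideanSpace ℝ (Fin n)}
    (hx : x ∈ A) (hy : y ∈ B)
    (hmin : ∀ z ∈ A, ∀ w ∈ B, dist x y ≤ dist z w) :
    (∀ z ∈ A, ⟪y - x, z⟫ ≤ ⟪y - x, x⟫) ∧ (∀ w ∈ B, ⟪y - x, y⟫ ≤ ⟪y - x, w⟫) := by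
  constructor
  · intro z hz
    have key : ∀ t : ℝ, 0 < t → t ≤ 1 → 2 * t * ⟪y - x, z - x⟫ ≤ t ^ 2 * ‖z - x‖ ^ 2 := by
      intro t ht ht1
      have hmem : x + t • (z - x) ∈ A := by
        have h := hA hx hz (by linarith : (0:ℝ) ≤ 1 - t) ht.le (by ring)
        have e : (1 - t) • x + t • z = x + t • (z - x) := by module
        rwa [e] at h
      have hd := hmin _ hmem y hy
      have e1 : dist x y = ‖y - x‖ := by rw [dist_comm, dist_eq_norm]
      have e2 : dist (x + t • (z - x)) y = ‖(y - x) - t • (z - x)‖ := by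
        rw [dist_comm, dist_eq_norm]
        congr 1
        module
      rw [e1, e2] at hd
      have h2 : ‖y - x‖ ^ 2 ≤ ‖(y - x) - t • (z - x)‖ ^ 2 :=
        pow_le_pow_left₀ (norm_nonneg _) hd 2
      have expand : ‖(y - x) - t • (z - x)‖ ^ 2
          = ‖y - x‖ ^ 2 - 2 * (t * ⟪y - x, z - x⟫) + (t * ‖z - x‖) ^ 2 := by
        rw [norm_sub_sq_real, real_inner_smul_right, norm_smul, Real.norm_eq_abs,
          abs_of_pos ht]
      rw [expand] at h2
      nlinarith [h2]
    have h0 := quad_nonpos (by positivity) key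
    rw [inner_sub_right] at h0
    linarith
  · intro w hw
    have key : ∀ t : ℝ, 0 < t → t ≤ 1 →
        2 * t * (-⟪y - x, w - y⟫) ≤ t ^ 2 * ‖w - y‖ ^ 2 := by
      intro t ht ht1
      have hmem : y + t • (w - y) ∈ B := by
        have h := hB hy hw (by linarith : (0:ℝ) ≤ 1 - t) ht.le (by ring)
        have e : (1 - t) • y + t • w = y + t • (w - y) := by module
        rwa [e] at h
      have hd := hmin x hx _ hmem
      have e1 : dist x y = ‖y - x‖ := by rw [dist_comm, dist_eq_norm]
      have e2 : dist x (y + t • (w - y)) = ‖(y - x) + t • (w - y)‖ := by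
        rw [dist_comm, dist_eq_norm]
        congr 1
        module
      rw [e1, e2] at hd
      have h2 : ‖y - x‖ ^ 2 ≤ ‖(y - x) + t • (w - y)‖ ^ 2 :=
        pow_le_pow_left₀ (norm_nonneg _) hd 2
      have expand : ‖(y - x) + t • (w - y)‖ ^ 2
          = ‖y - x‖ ^ 2 + 2 * (t * ⟪y - x, w - y⟫) + (t * ‖w - y‖) ^ 2 := by
        rw [norm_add_sq_real, real_inner_smul_right, norm_smul, Real.norm_eq_abs,
          abs_of_pos ht]
      rw [expand] at h2
      nlinarith [h2]
    have h0 := quad_nonpos (by positivity) key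
    rw [inner_sub_right] at h0
    linarith

lemma cap_bound {n : ℕ} (hn : 1 ≤ n) {C : Set (EuclideanSpace ℝ (Fin n))}
    (hC : C ⊆ Metric.closedBall 0 (unitBallRadius n))
    {u : EuclideanSpace ℝ (Fin n)} (hu : ‖u‖ = 1) {d : ℝ} (hd : 0 < d)
    (hcap : ∀ w ∈ C, d ≤ ⟪u, w⟫)
    (hRn : unitBallRadius n ^ 2 ≤ (n : ℝ)) :
    volume C ≤ ENNReal.ofReal (Real.exp (-(d ^ 2) / 2)) := by
  have : Nonempty (Fin n) := ⟨⟨0, by omega⟩⟩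
  set R := unitBallRadius n with hRdef
  have hR : 0 < R := unitBallRadius_pos n
  have hn0 : (0 : ℝ) < (n : ℝ) := by exact_mod_cast (by omega : 0 < n)
  have hne : (n : ℝ) ≠ 0 := ne_of_gt hn0
  set q := Real.exp (-(d ^ 2) / (2 * n)) with hqdef
  have hq : 0 < q := Real.exp_pos _
  have hsub : C ⊆ Metric.closedBall (d • u) (R * q) := by
    intro w hw
    have hwball : ‖w‖ ≤ R := by
      have := hC hw
      rwa [Metric.mem_closedBall, dist_zero_right] at this
    have hiw := hcap w hw
    rw [Metric.mem_closedBall, dist_eq_norm]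
    have hnormsq : ‖w - d • u‖ ^ 2 ≤ R ^ 2 - d ^ 2 := by
      have expand : ‖w - d • u‖ ^ 2 = ‖w‖ ^ 2 - 2 * (d * ⟪u, w⟫) + d ^ 2 := by
        rw [norm_sub_sq_real, real_inner_smul_right, real_inner_comm, norm_smul,
          Real.norm_eq_abs, abs_of_pos hd, hu, mul_one]
      rw [expand]
      nlinarith [hwball, hiw, norm_nonneg w, hd]
    have hkey : R ^ 2 - d ^ 2 ≤ (R * q) ^ 2 := by
      have e0 : (-(d ^ 2) / R ^ 2) * R ^ 2 = -(d ^ 2) := by field_simp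
      have h1 : R ^ 2 - d ^ 2 ≤ R ^ 2 * Real.exp (-(d ^ 2) / R ^ 2) := by
        have hexp := Real.add_one_le_exp (-(d ^ 2) / R ^ 2)
        have := mul_le_mul_of_nonneg_left hexp (by positivity : (0:ℝ) ≤ R ^ 2)
        nlinarith [this, e0]
      have h2 : Real.exp (-(d ^ 2) / R ^ 2) ≤ Real.exp (-(d ^ 2) / (n : ℝ)) := by
        apply Real.exp_le_exp.mpr
        rw [neg_div, neg_div, neg_le_neg_iff]
        exact div_le_div_of_nonneg_left (by positivity) (by positivity) hRn
      have h3 : (R * q) ^ 2 = R ^ 2 * Real.exp (-(d ^ 2) / (n : ℝ)) := by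
        rw [mul_pow, hqdef, ← Real.exp_nat_mul]
        congr 2
        push_cast
        field_simp
      rw [h3]
      calc R ^ 2 - d ^ 2 ≤ R ^ 2 * Real.exp (-(d ^ 2) / R ^ 2) := h1
        _ ≤ R ^ 2 * Real.exp (-(d ^ 2) / (n : ℝ)) :=
            mul_le_mul_of_nonneg_left h2 (by positivity)
    have := le_trans hnormsq hkey
    exact le_of_pow_le_pow_left₀ two_ne_zero (by positivity) this
  calc volume C ≤ volume (Metric.closedBall (d • u) (R * q)) := measure_mono hsub
    _ = ENNReal.ofReal (R * q) ^ n *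
        ENNReal.ofReal (Real.sqrt π ^ n / Real.Gamma ((n : ℝ) / 2 + 1)) := by
        rw [EuclideanSpace.volume_closedBall]
        simp [Fintype.card_fin]
    _ = ENNReal.ofReal q ^ n * ((ENNReal.ofReal R) ^ n *
        ENNReal.ofReal (Real.sqrt π ^ n / Real.Gamma ((n : ℝ) / 2 + 1))) := by
        rw [ENNReal.ofReal_mul hR.le, mul_pow]
        ring
    _ = ENNReal.ofReal q ^ n := by rw [volume_unitBall hn, mul_one]
    _ = ENNReal.ofReal (Real.exp (-(d ^ 2) / 2)) := by
        rw [← ENNReal.ofReal_pow hq.le, hqdef, ← Real.exp_nat_mul]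
        congr 1
        field_simp

set_option maxHeartbeats 1000000 in
/-- For every `ε ∈ (0, 1/2)` there is a constant `D` and an `N` such that for all `n ≥ N`,
any two compact convex subsets of the origin-centered unit-volume ball in `ℝⁿ`, each of
Lebesgue measure at least `ε`, are at distance at most `D` from one another. -/
theorem dist_le_of_convex_in_ball (ε : ℝ) (hε : ε ∈ Set.Ioo (0 : ℝ) (1 / 2)) :
    ∃ D > 0, ∃ N : ℕ, ∀ n ≥ N, ∀ A B : Set (EuclideanSpace ℝ (Fin n)),
      A ⊆ Metric.closedBall 0 (unitBallRadius n) →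
      B ⊆ Metric.closedBall 0 (unitBallRadius n) →
      IsCompact A → IsCompact B → Convex ℝ A → Convex ℝ B →
      ENNReal.ofReal ε ≤ volume A → ENNReal.ofReal ε ≤ volume B →
      setDist A B ≤ D := by
  obtain ⟨hε0, hε2⟩ := hε
  set d : ℝ := Real.sqrt (-(2 * Real.log ε)) + 1 with hddef
  have hlog : Real.log ε < 0 := Real.log_neg hε0 (by linarith)
  have hsq : Real.sqrt (-(2 * Real.log ε)) ^ 2 = -(2 * Real.log ε) :=
    Real.sq_sqrt (by linarith)
  have hd : 0 < d := by
    have := Real.sqrt_nonneg (-(2 * Real.log ε))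
    simp only [hddef]; linarith
  have hexp : Real.exp (-(d ^ 2) / 2) < ε := by
    have h1 : -(d ^ 2) / 2 < Real.log ε := by
      have hs := Real.sqrt_nonneg (-(2 * Real.log ε))
      nlinarith [hsq]
    calc Real.exp (-(d ^ 2) / 2) < Real.exp (Real.log ε) := Real.exp_lt_exp.mpr h1
      _ = ε := Real.exp_log hε0
  refine ⟨2 * d, by linarith, 2, fun n hn A B hAsub hBsub hAcomp hBcomp hAconv hBconv hvA hvB => ?_⟩
  have hn1 : 1 ≤ n := by omega
  have hRn : unitBallRadius n ^ 2 ≤ (n : ℝ) := unitBallRadius_sq_le hn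
  -- nonemptiness
  have hAne : A.Nonempty := by
    rw [Set.nonempty_iff_ne_empty]
    intro h
    rw [h, measure_empty, nonpos_iff_eq_zero, ENNReal.ofReal_eq_zero] at hvA
    linarith
  have hBne : B.Nonempty := by
    rw [Set.nonempty_iff_ne_empty]
    intro h
    rw [h, measure_empty, nonpos_iff_eq_zero, ENNReal.ofReal_eq_zero] at hvB
    linarith
  -- minimizing pair
  obtain ⟨p, hp, hpmin⟩ := (hAcomp.prod hBcomp).exists_isMinOn (hAne.prod hBne)
    ((continuous_fst.dist continuous_snd).continuousOn)
  obtain ⟨x, y⟩ := p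
  obtain ⟨hxA, hyB⟩ := hp
  have hmin : ∀ z ∈ A, ∀ w ∈ B, dist x y ≤ dist z w := by
    intro z hz w hw
    exact isMinOn_iff.mp hpmin (z, w) (Set.mk_mem_prod hz hw)
  have hsd : setDist A B ≤ dist x y := by
    apply csInf_le
    · refine ⟨0, ?_⟩
      rintro r ⟨a, _, b, _, rfl⟩
      exact dist_nonneg
    · exact ⟨x, hxA, y, hyB, rfl⟩
  refine le_trans hsd ?_
  by_contra hgt
  push_neg at hgt
  -- set up the separating direction
  set v := y - x with hvdef
  have hvnorm : ‖v‖ = dist x y := by rw [hvdef, dist_comm, dist_eq_norm]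
  have hvpos : 0 < ‖v‖ := by rw [hvnorm]; linarith
  have hvne : v ≠ 0 := by intro h; rw [h, norm_zero] at hvpos; linarith
  set u := ‖v‖⁻¹ • v with hudef
  have hu : ‖u‖ = 1 := by
    rw [hudef, norm_smul, norm_inv, norm_norm, inv_mul_cancel₀ (ne_of_gt hvpos)]
  have huv : ⟪u, v⟫ = ‖v‖ := by
    rw [hudef, real_inner_smul_left, real_inner_self_eq_norm_sq]
    field_simp
  have hiuxy : ⟪u, y⟫ - ⟪u, x⟫ = ‖v‖ := by
    rw [← inner_sub_right]; exact huv
  obtain ⟨hsepA, hsepB⟩ := min_sep hAconv hBconv hxA hyB hmin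
  have hcontr : ∀ C : Set (EuclideanSpace ℝ (Fin n)),
      C ⊆ Metric.closedBall 0 (unitBallRadius n) → ENNReal.ofReal ε ≤ volume C →
      ∀ u' : EuclideanSpace ℝ (Fin n), ‖u'‖ = 1 → (∀ w ∈ C, d ≤ ⟪u', w⟫) → False := by
    intro C hCsub hvC u' hu' hcap
    have hb := cap_bound hn1 hCsub hu' hd hcap hRn
    have : ENNReal.ofReal ε ≤ ENNReal.ofReal (Real.exp (-(d ^ 2) / 2)) := le_trans hvC hb
    rw [ENNReal.ofReal_le_ofReal_iff (Real.exp_pos _).le] at this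
    linarith
  by_cases hcase : d ≤ ⟪u, y⟫
  · -- B is contained in a far cap in direction u
    refine hcontr B hBsub hvB u hu fun w hw => ?_
    have h1 := hsepB w hw
    have h2 : ⟪u, y⟫ ≤ ⟪u, w⟫ := by
      rw [hudef, real_inner_smul_left, real_inner_smul_left]
      exact mul_le_mul_of_nonneg_left h1 (inv_nonneg.mpr (norm_nonneg _))
    linarith
  · -- A is contained in a far cap in direction -u
    push_neg at hcase
    have hux : ⟪u, x⟫ < -d := by
      have : 2 * d < ‖v‖ := by rw [hvnorm]; exact hgt
      linarith [hiuxy]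
    refine hcontr A hAsub hvA (-u) (by rw [norm_neg]; exact hu) fun z hz => ?_
    have h1 := hsepA z hz
    have h2 : ⟪u, z⟫ ≤ ⟪u, x⟫ := by
      rw [hudef, real_inner_smul_left, real_inner_smul_left]
      exact mul_le_mul_of_nonneg_left h1 (inv_nonneg.mpr (norm_nonneg _))
    rw [inner_neg_left]
    linarith
end
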